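/- arXiv:2004.08689 — 2 statements merged into one kernel-verified Lean document; each statement's English description precedes it below -/
import Mathlib

section
/- Let u, ũ, û, ũ̂ be complex numbers and γ₁, γ₂ nonzero complex constants, and suppose all four differences u−ũ, u−û, ũ−ũ̂, û−ũ̂ are nonzero. Define the 2×2 matrices D^(γ)(λ,b) = [[λ, γb],[γ b⁻¹, λ]] and set b' = γ₁/(u−ũ), b'' = γ₂/(u−û), b̂' = γ₁/(û−ũ̂), b̃'' = γ₂/(ũ−ũ̂). Then D^(γ₁)(λ,b̂')·D^(γ₂)(λ,b'') − D^(γ₂)(λ,b̃'')·D^(γ₁)(λ,b') = (Ξ/Υ)·[[(u−ũ)(u−û), λ(ũ̂−ũ−û+u)],[0, −(ũ−ũ̂)(û−ũ̂)]], where Ξ = γ₁²(u−û)(ũ−ũ̂) − γ₂²(u−ũ)(û−ũ̂) and Υ = (u−ũ)(u−û)(ũ−ũ̂)(û−ũ̂). In particular, the discrete zero-curvature equation D̂^(γ₁)D^(γ₂) = D̃^(γ₂)D^(γ₁) holds for all λ if and only if Ξ = 0. -/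
/-- Darboux matrix `D^(γ)(λ,b)`. -/
noncomputable def Dmat (γ lam b : ℂ) : Matrix (Fin 2) (Fin 2) ℂ := !![lam, γ * b; γ * b⁻¹, lam]

set_option maxHeartbeats 1600000 in
/-- Lemma 1.1: the Lax pair identity for the lattice SKdV equation. -/
theorem lSKdV_lax_pair (u ut uh uth γ1 γ2 : ℂ)
    (hγ1 : γ1 ≠ 0) (hγ2 : γ2 ≠ 0)
    (h1 : u - ut ≠ 0) (h2 : u - uh ≠ 0) (h3 : ut - uth ≠ 0) (h4 : uh - uth ≠ 0) :
    (∀ lam : ℂ,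
      Dmat γ1 lam (γ1 / (uh - uth)) * Dmat γ2 lam (γ2 / (u - uh))
        - Dmat γ2 lam (γ2 / (ut - uth)) * Dmat γ1 lam (γ1 / (u - ut))
      = ((γ1 ^ 2 * (u - uh) * (ut - uth) - γ2 ^ 2 * (u - ut) * (uh - uth))
          / ((u - ut) * (u - uh) * (ut - uth) * (uh - uth)))
        • !![(u - ut) * (u - uh), lam * (uth - ut - uh + u);
             0, -((ut - uth) * (uh - uth))])
    ∧ ((∀ lam : ℂ,
        Dmat γ1 lam (γ1 / (uh - uth)) * Dmat γ2 lam (γ2 / (u - uh))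
          = Dmat γ2 lam (γ2 / (ut - uth)) * Dmat γ1 lam (γ1 / (u - ut)))
        ↔ γ1 ^ 2 * (u - uh) * (ut - uth) - γ2 ^ 2 * (u - ut) * (uh - uth) = 0) := by
  have key : ∀ lam : ℂ,
      Dmat γ1 lam (γ1 / (uh - uth)) * Dmat γ2 lam (γ2 / (u - uh))
        - Dmat γ2 lam (γ2 / (ut - uth)) * Dmat γ1 lam (γ1 / (u - ut))
      = ((γ1 ^ 2 * (u - uh) * (ut - uth) - γ2 ^ 2 * (u - ut) * (uh - uth))
          / ((u - ut) * (u - uh) * (ut - uth) * (uh - uth)))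
        • !![(u - ut) * (u - uh), lam * (uth - ut - uh + u);
             0, -((ut - uth) * (uh - uth))] := by
    intro lam
    unfold Dmat
    ext i j
    fin_cases i <;> fin_cases j <;>
      simp [Matrix.mul_apply, Fin.sum_univ_two, Matrix.smul_apply] <;>
      field_simp <;> ring
  refine ⟨key, ?_, ?_⟩
  · intro h
    have h0 := key 0
    rw [h 0, sub_self] at h0
    have := congrArg (fun M => M 0 0) h0.symm
    simp [Matrix.smul_apply] at this
    tauto
  · intro h lam
    have := key lam
    rw [h] at this
    simp at this
    rw [sub_eq_zero] at this
    exact this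
end

section
/- With the same setup as Lemma 3.1 (the map (p̃_j, q̃_j)ᵀ = (α_j²−γ²)^{−1/2} D^(γ)(α_j,b)(p_j,q_j)ᵀ), one has the scalar identity γ b⁻¹ + ⟨p̃,q̃⟩ − ⟨p,q⟩ = −γ b⁻¹ · P^(γ)(b;p,q), where ⟨ξ,η⟩ = Σ_{j=1}^N ξ_jη_j and P^(γ)(b;p,q) = b²L²¹(γ) + 2bL¹¹(γ) − L¹²(γ). In particular, if P^(γ)(b;p,q) = 0 then b = γ/(⟨p,q⟩ − ⟨p̃,q̃⟩). -/
open Finset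

/-- Quadratic form `Q_γ(ξ,η) = Σ_j ξ_j η_j / (γ² − α_j²)`. -/
noncomputable def Qlam {N : ℕ} (α : Fin N → ℝ) (lam : ℝ) (ξ η : Fin N → ℝ) : ℝ :=
  ∑ j, ξ j * η j / (lam ^ 2 - (α j) ^ 2)

/-- Lax matrix `L(λ;p,q)` of Eq. (2.1). -/
noncomputable def Lax {N : ℕ} (α : Fin N → ℝ) (lam : ℝ) (p q : Fin N → ℝ) :
    Matrix (Fin 2) (Fin 2) ℝ :=
  !![lam * Qlam α lam p q, 1 - Qlam α lam (fun j => α j * p j) p;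
     Qlam α lam (fun j => α j * q j) q, -(lam * Qlam α lam p q)]

/-- Eq. (3.4): the scalar identity `γb⁻¹ + ⟨p̃,q̃⟩ − ⟨p,q⟩ = −γb⁻¹ P^(γ)(b;p,q)`,
and in particular `b = γ/(⟨p,q⟩ − ⟨p̃,q̃⟩)` when `P^(γ)(b;p,q) = 0`. -/
theorem eq34_scalar_identity {N : ℕ} (α : Fin N → ℝ) (hα : ∀ j, α j ≠ 0)
    (hαdist : ∀ j k, (α j) ^ 2 = (α k) ^ 2 → j = k)
    (γ : ℝ) (hγ0 : γ ≠ 0) (hγ : ∀ j, γ ^ 2 ≠ (α j) ^ 2)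
    (hpos : ∀ j, (α j) ^ 2 - γ ^ 2 > 0)
    (p q : Fin N → ℝ) (b : ℝ) (hb : b ≠ 0) :
    let pt : Fin N → ℝ := fun j => (Real.sqrt ((α j) ^ 2 - γ ^ 2))⁻¹ * (α j * p j + γ * b * q j)
    let qt : Fin N → ℝ := fun j => (Real.sqrt ((α j) ^ 2 - γ ^ 2))⁻¹ * (γ * b⁻¹ * p j + α j * q j)
    let P : ℝ := b ^ 2 * Lax α γ p q 1 0 + 2 * b * Lax α γ p q 0 0 - Lax α γ p q 0 1
    γ * b⁻¹ + (∑ j, pt j * qt j) - (∑ j, p j * q j) = -(γ * b⁻¹) * P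
    ∧ (P = 0 → b = γ / ((∑ j, p j * q j) - ∑ j, pt j * qt j)) := by
  intro pt qt P
  have key : ∀ j : Fin N, pt j * qt j - p j * q j =
      -(γ * b⁻¹) * (b ^ 2 * (α j * q j * q j / (γ ^ 2 - α j ^ 2))
        + 2 * b * (γ * (p j * q j / (γ ^ 2 - α j ^ 2)))
        + (α j * p j * p j / (γ ^ 2 - α j ^ 2))) := by
    intro j
    have hd : γ ^ 2 - α j ^ 2 ≠ 0 := sub_ne_zero.mpr (hγ j)
    have hs : Real.sqrt (α j ^ 2 - γ ^ 2) * Real.sqrt (α j ^ 2 - γ ^ 2)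
        = α j ^ 2 - γ ^ 2 := Real.mul_self_sqrt (le_of_lt (hpos j))
    have hsne : Real.sqrt (α j ^ 2 - γ ^ 2) ≠ 0 :=
      ne_of_gt (Real.sqrt_pos.mpr (hpos j))
    have h1 : pt j * qt j = (α j * p j + γ * b * q j) * (γ * b⁻¹ * p j + α j * q j)
        / (α j ^ 2 - γ ^ 2) := by
      show (Real.sqrt (α j ^ 2 - γ ^ 2))⁻¹ * (α j * p j + γ * b * q j) *
          ((Real.sqrt (α j ^ 2 - γ ^ 2))⁻¹ * (γ * b⁻¹ * p j + α j * q j)) = _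
      rw [show (Real.sqrt (α j ^ 2 - γ ^ 2))⁻¹ * (α j * p j + γ * b * q j) *
          ((Real.sqrt (α j ^ 2 - γ ^ 2))⁻¹ * (γ * b⁻¹ * p j + α j * q j))
          = (α j * p j + γ * b * q j) * (γ * b⁻¹ * p j + α j * q j)
            / (Real.sqrt (α j ^ 2 - γ ^ 2) * Real.sqrt (α j ^ 2 - γ ^ 2)) from by ring, hs]
    rw [h1]
    have hd' : α j ^ 2 - γ ^ 2 ≠ 0 := ne_of_gt (hpos j)
    field_simp
    ring
  have hmain : γ * b⁻¹ + (∑ j, pt j * qt j) - (∑ j, p j * q j) = -(γ * b⁻¹) * P := by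
    have hsum : (∑ j, pt j * qt j) - (∑ j, p j * q j)
        = ∑ j, (pt j * qt j - p j * q j) := by
      rw [Finset.sum_sub_distrib]
    have hS : (∑ j, (pt j * qt j - p j * q j))
        = -(γ * b⁻¹) * (b ^ 2 * Qlam α γ (fun j => α j * q j) q
          + 2 * b * (γ * Qlam α γ p q)
          + Qlam α γ (fun j => α j * p j) p) := by
      rw [Finset.sum_congr rfl (fun j _ => key j), ← Finset.mul_sum]
      congr 1
      simp only [Qlam, Finset.mul_sum]
      rw [← Finset.sum_add_distrib, ← Finset.sum_add_distrib]
      try exact Finset.sum_congr rfl (fun j _ => by ring)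
    have hP : P = b ^ 2 * Qlam α γ (fun j => α j * q j) q
        + 2 * b * (γ * Qlam α γ p q) - (1 - Qlam α γ (fun j => α j * p j) p) := by
      show b ^ 2 * Lax α γ p q 1 0 + 2 * b * Lax α γ p q 0 0 - Lax α γ p q 0 1 = _
      simp [Lax]
      try ring
    rw [hP]
    have expand : -(γ * b⁻¹) * (b ^ 2 * Qlam α γ (fun j => α j * q j) q
          + 2 * b * (γ * Qlam α γ p q) - (1 - Qlam α γ (fun j => α j * p j) p))
        = γ * b⁻¹ + -(γ * b⁻¹) * (b ^ 2 * Qlam α γ (fun j => α j * q j) q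
          + 2 * b * (γ * Qlam α γ p q)
          + Qlam α γ (fun j => α j * p j) p) := by ring
    rw [expand]
    linarith [hsum, hS]
  refine ⟨hmain, fun hP => ?_⟩
  have h0 : γ * b⁻¹ + (∑ j, pt j * qt j) - (∑ j, p j * q j) = 0 := by
    rw [hmain, hP, mul_zero]
  have hd : (∑ j, p j * q j) - (∑ j, pt j * qt j) = γ * b⁻¹ := by linarith
  rw [hd]
  field_simp
end
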